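/- arXiv:2001.02378 — 3 statements merged into one kernel-verified Lean document; each statement's English description precedes it below -/
import Mathlib

section
/- Let f : ℝ^d → [0,1] be measurable and σ > 0. Define f̂(x) = E_{η ~ N(0, σ²I)} f(x+η). Then the map x ↦ Φ⁻¹(f̂(x)) is (1/σ)-Lipschitz, where Φ is the standard Gaussian CDF. -/
open MeasureTheory Real Set

noncomputable def Phi (x : ℝ) : ℝ :=
  ∫ t in Set.Iic x, (Real.sqrt (2 * Real.pi))⁻¹ * Real.exp (-t ^ 2 / 2)

noncomputable def PhiInv : ℝ → ℝ := Function.invFun Phi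

noncomputable def gaussMeasure (d : ℕ) (σ : ℝ) :
    Measure (EuclideanSpace ℝ (Fin d)) :=
  volume.withDensity fun x =>
    ENNReal.ofReal ((2 * Real.pi * σ ^ 2) ^ (-(d : ℝ) / 2) *
      Real.exp (-‖x‖ ^ 2 / (2 * σ ^ 2)))

open scoped RealInnerProductSpace NNReal ENNReal
open ProbabilityTheory Filter Topology

/-! ### One-dimensional Gaussian facts -/

noncomputable def gpdf (σ t : ℝ) : ℝ :=
  (Real.sqrt (2 * Real.pi * σ ^ 2))⁻¹ * Real.exp (-t ^ 2 / (2 * σ ^ 2))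

lemma gpdf_eq (σ : ℝ) : gpdf σ = gaussianPDFReal 0 ⟨σ ^ 2, sq_nonneg σ⟩ := by
  funext t
  simp [gpdf, gaussianPDFReal]
  rfl

lemma gpdf_nonneg (σ t : ℝ) : 0 ≤ gpdf σ t := by
  unfold gpdf; positivity

lemma integrable_gpdf (σ : ℝ) : Integrable (gpdf σ) := by
  rw [gpdf_eq]; exact integrable_gaussianPDFReal _ _

lemma nnreal_sq_ne_zero {σ : ℝ} (hσ : 0 < σ) :
    (⟨σ ^ 2, sq_nonneg σ⟩ : ℝ≥0) ≠ 0 := by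
  intro h
  have : σ ^ 2 = 0 := congrArg NNReal.toReal h
  nlinarith

lemma integral_gpdf {σ : ℝ} (hσ : 0 < σ) : ∫ t, gpdf σ t = 1 := by
  rw [gpdf_eq]
  exact integral_gaussianPDFReal_eq_one 0 (nnreal_sq_ne_zero hσ)

lemma Phi_eq (x : ℝ) : Phi x = ∫ t in Iic x, gaussianPDFReal 0 1 t := by
  unfold Phi gaussianPDFReal
  norm_num

lemma Phi_eq_cdf (x : ℝ) : Phi x = cdf (gaussianReal 0 1) x := by
  rw [cdf_eq_real, measureReal_def, gaussianReal_apply_eq_integral 0 one_ne_zero,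
    ENNReal.toReal_ofReal
      (setIntegral_nonneg measurableSet_Iic fun t _ => gaussianPDFReal_nonneg _ _ _),
    Phi_eq]

lemma Phi_tendsto_atTop : Tendsto Phi atTop (𝓝 1) := by
  have : Phi = cdf (gaussianReal 0 1) := funext Phi_eq_cdf
  rw [this]; exact tendsto_cdf_atTop _

lemma Phi_tendsto_atBot : Tendsto Phi atBot (𝓝 0) := by
  have : Phi = cdf (gaussianReal 0 1) := funext Phi_eq_cdf
  rw [this]; exact tendsto_cdf_atBot _

lemma continuous_Phi : Continuous Phi := by
  have hi : Integrable (gaussianPDFReal 0 1) := integrable_gaussianPDFReal _ _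
  have h : ∀ x, Phi x =
      (∫ t in Iic (0 : ℝ), gaussianPDFReal 0 1 t) +
        ∫ t in (0 : ℝ)..x, gaussianPDFReal 0 1 t := by
    intro x
    rw [Phi_eq]
    have := intervalIntegral.integral_Iic_sub_Iic (hi.integrableOn) (hi.integrableOn)
      (a := 0) (b := x)
    linarith
  rw [funext h]
  exact continuous_const.add (hi.continuous_primitive 0)

lemma strictMono_Phi : StrictMono Phi := by
  intro a b hab
  have hi : Integrable (gaussianPDFReal 0 1) := integrable_gaussianPDFReal _ _
  have key : Phi b - Phi a = ∫ t in a..b, gaussianPDFReal 0 1 t := by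
    rw [Phi_eq, Phi_eq]
    exact intervalIntegral.integral_Iic_sub_Iic hi.integrableOn hi.integrableOn
  have pos : 0 < ∫ t in a..b, gaussianPDFReal 0 1 t :=
    intervalIntegral.intervalIntegral_pos_of_pos hi.intervalIntegrable
      (fun t => gaussianPDFReal_pos 0 1 t one_ne_zero) hab
  linarith

lemma Phi_mem_range {p : ℝ} (hp : p ∈ Ioo (0 : ℝ) 1) : ∃ x, Phi x = p := by
  obtain ⟨a, ha⟩ : ∃ a, Phi a < p := (Phi_tendsto_atBot.eventually_lt_const hp.1).exists
  obtain ⟨b, hb⟩ : ∃ b, p < Phi b := (Phi_tendsto_atTop.eventually_const_lt hp.2).exists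
  have hab : a ≤ b := (strictMono_Phi.lt_iff_lt.1 (ha.trans hb)).le
  obtain ⟨x, _, hx⟩ := intermediate_value_Icc hab continuous_Phi.continuousOn
    ⟨ha.le, hb.le⟩
  exact ⟨x, hx⟩

lemma Phi_PhiInv {p : ℝ} (hp : p ∈ Ioo (0 : ℝ) 1) : Phi (PhiInv p) = p :=
  Function.invFun_eq (Phi_mem_range hp)

lemma setIntegral_gpdf_Iic {σ : ℝ} (hσ : 0 < σ) (a : ℝ) :
    ∫ t in Iic a, gpdf σ t = Phi (a / σ) := by
  have hv : (⟨σ ^ 2, sq_nonneg σ⟩ : ℝ≥0) ≠ 0 := nnreal_sq_ne_zero hσ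
  have h2 : gaussianReal 0 ⟨σ ^ 2, sq_nonneg σ⟩ = (gaussianReal 0 1).map (σ * ·) := by
    rw [gaussianReal_map_const_mul]
    congr 1
    · ring
    · ext : 1; simp; rfl
  have h3 : (gaussianReal 0 ⟨σ ^ 2, sq_nonneg σ⟩) (Iic a) =
      (gaussianReal 0 1) (Iic (a / σ)) := by
    rw [h2, Measure.map_apply (measurable_const_mul σ) measurableSet_Iic]
    congr 1
    ext t
    simp only [mem_preimage, mem_Iic]
    rw [← le_div_iff₀' hσ]
  have h4 := gaussianReal_apply_eq_integral 0 hv (Iic a)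
  have h5 := gaussianReal_apply_eq_integral 0 one_ne_zero (Iic (a / σ))
  rw [h4, h5] at h3
  have h6 : ∫ t in Iic a, gaussianPDFReal 0 ⟨σ ^ 2, sq_nonneg σ⟩ t =
      ∫ t in Iic (a / σ), gaussianPDFReal 0 1 t := by
    have hnn1 : 0 ≤ ∫ t in Iic a, gaussianPDFReal 0 ⟨σ ^ 2, sq_nonneg σ⟩ t :=
      setIntegral_nonneg measurableSet_Iic fun t _ => gaussianPDFReal_nonneg _ _ _
    have hnn2 : 0 ≤ ∫ t in Iic (a / σ), gaussianPDFReal 0 1 t :=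
      setIntegral_nonneg measurableSet_Iic fun t _ => gaussianPDFReal_nonneg _ _ _
    have := congrArg ENNReal.toReal h3
    rwa [ENNReal.toReal_ofReal hnn1, ENNReal.toReal_ofReal hnn2] at this
  rw [gpdf_eq, h6, ← Phi_eq]

/-! ### The multivariate Gaussian density -/

noncomputable def gden (d : ℕ) (σ : ℝ) (x : EuclideanSpace ℝ (Fin d)) : ℝ :=
  (2 * Real.pi * σ ^ 2) ^ (-(d : ℝ) / 2) * Real.exp (-‖x‖ ^ 2 / (2 * σ ^ 2))

lemma gden_nonneg (d : ℕ) (σ : ℝ) (x : EuclideanSpace ℝ (Fin d)) : 0 ≤ gden d σ x := by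
  unfold gden
  positivity

lemma continuous_gden (d : ℕ) (σ : ℝ) : Continuous (gden d σ) := by
  unfold gden
  exact continuous_const.mul (((continuous_norm.pow 2).neg.div_const _).rexp)

lemma gden_comp_symm (d : ℕ) {σ : ℝ} (hσ : 0 < σ) (w : Fin d → ℝ) :
    gden d σ ((WithLp.toLp 2 : (Fin d → ℝ) → EuclideanSpace ℝ (Fin d)) w) = ∏ i, gpdf σ (w i) := by
  have hC : (0 : ℝ) < 2 * Real.pi * σ ^ 2 := by positivity
  have hnorm : ‖(WithLp.toLp 2 : (Fin d → ℝ) → EuclideanSpace ℝ (Fin d)) w‖ ^ 2 = ∑ i, w i ^ 2 := by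
    rw [EuclideanSpace.norm_eq, Real.sq_sqrt (Finset.sum_nonneg fun i _ => sq_nonneg _)]
    congr 1
    ext i
    rw [Real.norm_eq_abs, sq_abs]
  unfold gden gpdf
  rw [hnorm, Finset.prod_mul_distrib, ← Real.exp_sum]
  congr 1
  · rw [Finset.prod_const, Finset.card_univ, Fintype.card_fin]
    have hsq : (Real.sqrt (2 * Real.pi * σ ^ 2))⁻¹ =
        (2 * Real.pi * σ ^ 2) ^ (-(1 : ℝ) / 2) := by
      rw [Real.sqrt_eq_rpow, ← Real.rpow_neg hC.le]
      norm_num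
    rw [hsq, ← Real.rpow_natCast ((2 * Real.pi * σ ^ 2) ^ (-(1 : ℝ) / 2)) d,
      ← Real.rpow_mul hC.le]
    congr 1
    ring
  · congr 1
    rw [← Finset.sum_div, Finset.sum_neg_distrib]

lemma integrable_gden (d : ℕ) {σ : ℝ} (hσ : 0 < σ) : Integrable (gden d σ) := by
  rw [← (PiLp.volume_preserving_toLp (Fin d)).integrable_comp_emb
    (MeasurableEquiv.toLp 2 (Fin d → ℝ)).measurableEmbedding]
  have h : gden d σ ∘ (WithLp.toLp 2 : (Fin d → ℝ) → EuclideanSpace ℝ (Fin d)) =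
      fun w : Fin d → ℝ => ∏ i, gpdf σ (w i) :=
    funext fun w => gden_comp_symm d hσ w
  rw [h]
  exact Integrable.fintype_prod fun _ => integrable_gpdf σ

lemma key_integral (d : ℕ) {σ : ℝ} (hσ : 0 < σ) (u : EuclideanSpace ℝ (Fin d))
    (hu : ‖u‖ = 1) (g : ℝ → ℝ) :
    ∫ w, g ⟪w, u⟫ * gden d σ w = ∫ t, g t * gpdf σ t := by
  have hd : 0 < d := by
    rcases Nat.eq_zero_or_pos d with h | h
    · exfalso
      subst h
      have : u = 0 := Subsingleton.elim u 0
      rw [this, norm_zero] at hu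
      norm_num at hu
    · exact h
  set i0 : Fin d := ⟨0, hd⟩ with hi0
  have hcard : Module.finrank ℝ (EuclideanSpace ℝ (Fin d)) = Fintype.card (Fin d) := by
    simp
  have horth : Orthonormal ℝ (({i0} : Set (Fin d)).restrict fun _ => u) := by
    constructor
    · intro i
      exact hu
    · intro i j hij
      exfalso
      apply hij
      have hi := i.2
      have hj := j.2
      simp only [Set.mem_singleton_iff] at hi hj
      exact Subtype.ext (hi.trans hj.symm)
  obtain ⟨b, hb⟩ := horth.exists_orthonormalBasis_extension_of_card_eq hcard
  have hbu : b i0 = u := hb i0 rfl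
  have h1 : ∀ w : EuclideanSpace ℝ (Fin d), g ⟪w, u⟫ = g (b.repr w i0) := by
    intro w
    rw [b.repr_apply_apply, hbu, real_inner_comm]
  simp_rw [h1]
  have emb1 : MeasurableEmbedding (b.repr.symm : EuclideanSpace ℝ (Fin d) →
      EuclideanSpace ℝ (Fin d)) :=
    b.repr.symm.toHomeomorph.measurableEmbedding
  have h2 := b.measurePreserving_repr_symm.integral_comp emb1
    (fun z => g (b.repr z i0) * gden d σ z)
  rw [← h2]
  have h3 : ∀ w : EuclideanSpace ℝ (Fin d),
      g (b.repr (b.repr.symm w) i0) * gden d σ (b.repr.symm w) =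
        g (w i0) * gden d σ w := by
    intro w
    have hg : gden d σ (b.repr.symm w) = gden d σ w := by
      unfold gden
      rw [b.repr.symm.norm_map]
    rw [b.repr.apply_symm_apply, hg]
  simp_rw [h3]
  have emb2 : MeasurableEmbedding (WithLp.toLp 2 :
      (Fin d → ℝ) → EuclideanSpace ℝ (Fin d)) :=
    (MeasurableEquiv.toLp 2 (Fin d → ℝ)).measurableEmbedding
  have h4 := (PiLp.volume_preserving_toLp (Fin d)).integral_comp emb2 (fun w : EuclideanSpace ℝ (Fin d) => g (w i0) * gden d σ w)
  rw [← h4]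
  have h5 : ∀ v : Fin d → ℝ,
      g ((WithLp.toLp 2 : (Fin d → ℝ) → EuclideanSpace ℝ (Fin d)) v i0) *
          gden d σ ((WithLp.toLp 2 : (Fin d → ℝ) → EuclideanSpace ℝ (Fin d)) v) =
        ∏ i, (fun i t => if i = i0 then g t * gpdf σ t else gpdf σ t) i (v i) := by
    intro v
    rw [gden_comp_symm d hσ v]
    have hv0 : (WithLp.toLp 2 : (Fin d → ℝ) → EuclideanSpace ℝ (Fin d)) v i0 = v i0 := rfl
    rw [hv0]
    rw [← Finset.mul_prod_erase Finset.univ _ (Finset.mem_univ i0),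
      ← Finset.mul_prod_erase Finset.univ
        (fun i => (fun i t => if i = i0 then g t * gpdf σ t else gpdf σ t) i (v i))
        (Finset.mem_univ i0)]
    simp only [eq_self_iff_true, if_true]
    rw [← mul_assoc]
    congr 1
    refine (Finset.prod_congr rfl fun i hi => ?_).symm
    rw [if_neg (Finset.ne_of_mem_erase hi)]
  refine (integral_congr_ae (Filter.Eventually.of_forall h5)).trans ?_
  rw [MeasureTheory.integral_fintype_prod_volume_eq_prod (ι := Fin d)
    (fun i t => if i = i0 then g t * gpdf σ t else gpdf σ t)]
  rw [← Finset.mul_prod_erase Finset.univ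
    (fun i => ∫ t, (fun i t => if i = i0 then g t * gpdf σ t else gpdf σ t) i t)
    (Finset.mem_univ i0)]
  simp only [eq_self_iff_true, if_true]
  have herase : ∀ i ∈ Finset.univ.erase i0,
      (∫ t, (fun i t => if i = i0 then g t * gpdf σ t else gpdf σ t) i t) = 1 := by
    intro i hi
    simp only [if_neg (Finset.ne_of_mem_erase hi)]
    exact integral_gpdf hσ
  rw [Finset.prod_congr rfl herase, Finset.prod_const_one, mul_one]

lemma halfspace_integral (d : ℕ) {σ : ℝ} (hσ : 0 < σ) (u : EuclideanSpace ℝ (Fin d))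
    (hu : ‖u‖ = 1) (a : ℝ) :
    ∫ w, (if ⟪w, u⟫ ≤ a then (1 : ℝ) else 0) * gden d σ w = Phi (a / σ) := by
  rw [key_integral d hσ u hu fun t => if t ≤ a then 1 else 0]
  have h : (fun t => (if t ≤ a then (1 : ℝ) else 0) * gpdf σ t) =
      (Iic a).indicator (gpdf σ) := by
    funext t
    by_cases h : t ≤ a <;> simp [Set.indicator, h]
  rw [h, integral_indicator measurableSet_Iic, setIntegral_gpdf_Iic hσ a]

lemma gden_integral_one (d : ℕ) {σ : ℝ} (hσ : 0 < σ) (u : EuclideanSpace ℝ (Fin d))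
    (hu : ‖u‖ = 1) : ∫ w, gden d σ w = 1 := by
  have := key_integral d hσ u hu fun _ => 1
  simpa [integral_gpdf hσ] using this

lemma fhat_eq (d : ℕ) {σ : ℝ} (hσ : 0 < σ) (f : EuclideanSpace ℝ (Fin d) → ℝ)
    (z : EuclideanSpace ℝ (Fin d)) :
    ∫ η, f (z + η) ∂(gaussMeasure d σ) = ∫ w, gden d σ w * f (z + w) := by
  have hmeq : gaussMeasure d σ =
      volume.withDensity fun w => ((gden d σ w).toNNReal : ℝ≥0∞) := rfl
  rw [hmeq, integral_withDensity_eq_integral_smul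
    ((continuous_gden d σ).measurable.real_toNNReal) (fun w => f (z + w))]
  congr 1
  funext w
  rw [NNReal.smul_def, smul_eq_mul, Real.coe_toNNReal _ (gden_nonneg d σ w)]

/-! ### The main one-sided estimate -/

lemma one_sided (d : ℕ) (σ : ℝ) (hσ : 0 < σ)
    (f : EuclideanSpace ℝ (Fin d) → ℝ) (hf : Measurable f)
    (hf01 : ∀ x, f x ∈ Set.Icc (0 : ℝ) 1)
    (fhat : EuclideanSpace ℝ (Fin d) → ℝ)
    (hfhat : ∀ x, fhat x = ∫ η, f (x + η) ∂(gaussMeasure d σ))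
    (hrange : ∀ x, fhat x ∈ Set.Ioo (0 : ℝ) 1)
    (x y : EuclideanSpace ℝ (Fin d)) (hxy : x ≠ y) :
    PhiInv (fhat x) - PhiInv (fhat y) ≤ (1 / σ) * ‖x - y‖ := by
  set v : EuclideanSpace ℝ (Fin d) := y - x with hv
  have hvne : v ≠ 0 := sub_ne_zero.2 (Ne.symm hxy)
  have hnv : 0 < ‖v‖ := norm_pos_iff.2 hvne
  set u : EuclideanSpace ℝ (Fin d) := ‖v‖⁻¹ • v with hudef
  have hu : ‖u‖ = 1 := by
    rw [hudef, norm_smul, norm_inv, norm_norm, inv_mul_cancel₀ hnv.ne']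
  set p := fhat x with hpdef
  set q := fhat y with hqdef
  have hp : p ∈ Ioo (0 : ℝ) 1 := hrange x
  have hq : q ∈ Ioo (0 : ℝ) 1 := hrange y
  set a : ℝ := σ * PhiInv p with hadef
  set c : ℝ := Real.exp ((2 * a * ‖v‖ - ‖v‖ ^ 2) / (2 * σ ^ 2)) with hcdef
  set χ : EuclideanSpace ℝ (Fin d) → ℝ :=
    fun w => if ⟪w, u⟫ ≤ a then (1 : ℝ) else 0 with hχdef
  -- measurability and integrability facts
  have hXmeas : AEStronglyMeasurable (fun w : EuclideanSpace ℝ (Fin d) => f (x + w))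
      volume := (hf.comp (measurable_const.add measurable_id)).aestronglyMeasurable
  have hXbdd : ∃ C, ∀ w : EuclideanSpace ℝ (Fin d), ‖f (x + w)‖ ≤ C := by
    refine ⟨1, fun w => ?_⟩
    rw [Real.norm_eq_abs, abs_le]
    exact ⟨by linarith [(hf01 (x + w)).1], (hf01 (x + w)).2⟩
  have hχmeas : AEStronglyMeasurable χ volume := by
    have : Measurable χ := by
      apply Measurable.ite _ measurable_const measurable_const
      exact measurableSet_le ((continuous_id.inner continuous_const).measurable)
        measurable_const
    exact this.aestronglyMeasurable
  have hχbdd : ∃ C, ∀ w : EuclideanSpace ℝ (Fin d), ‖χ w‖ ≤ C := by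
    refine ⟨1, fun w => ?_⟩
    simp only [hχdef]
    split_ifs <;> simp
  have Igden : Integrable (gden d σ) := integrable_gden d hσ
  have Igdenv : Integrable fun w => gden d σ (w - v) := Igden.comp_sub_right v
  have It1 : Integrable fun w => f (x + w) * gden d σ (w - v) :=
    Igdenv.bdd_mul hXmeas (Filter.Eventually.of_forall hXbdd.choose_spec)
  have It2 : Integrable fun w => χ w * gden d σ (w - v) := Igdenv.bdd_mul hχmeas (Filter.Eventually.of_forall hχbdd.choose_spec)
  have It3 : Integrable fun w => f (x + w) * gden d σ w := Igden.bdd_mul hXmeas (Filter.Eventually.of_forall hXbdd.choose_spec)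
  have It4 : Integrable fun w => χ w * gden d σ w := Igden.bdd_mul hχmeas (Filter.Eventually.of_forall hχbdd.choose_spec)
  -- the likelihood ratio identity
  have hinner_vu : ∀ w : EuclideanSpace ℝ (Fin d), ⟪w, v⟫ = ‖v‖ * ⟪w, u⟫ := by
    intro w
    rw [hudef, real_inner_smul_right]
    rw [← mul_assoc, mul_inv_cancel₀ hnv.ne', one_mul]
  have hratio : ∀ w : EuclideanSpace ℝ (Fin d),
      gden d σ (w - v) = gden d σ w *
        Real.exp ((2 * ⟪w, v⟫ - ‖v‖ ^ 2) / (2 * σ ^ 2)) := by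
    intro w
    unfold gden
    rw [norm_sub_sq_real,
      mul_assoc ((2 * Real.pi * σ ^ 2) ^ (-(d : ℝ) / 2)), ← Real.exp_add]
    congr 1
    rw [Real.exp_eq_exp]
    ring
  -- pointwise nonnegativity
  have hkey : ∀ w : EuclideanSpace ℝ (Fin d),
      0 ≤ (f (x + w) - χ w) * (gden d σ (w - v) - c * gden d σ w) := by
    intro w
    rw [hratio w, hinner_vu w]
    by_cases hcase : ⟪w, u⟫ ≤ a
    · have h1 : f (x + w) - χ w ≤ 0 := by
        rw [hχdef]
        simp only [if_pos hcase]
        linarith [(hf01 (x + w)).2]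
      have h2 : gden d σ w * Real.exp ((2 * (‖v‖ * ⟪w, u⟫) - ‖v‖ ^ 2) / (2 * σ ^ 2)) -
          c * gden d σ w ≤ 0 := by
        rw [hcdef]
        have hexp : Real.exp ((2 * (‖v‖ * ⟪w, u⟫) - ‖v‖ ^ 2) / (2 * σ ^ 2)) ≤
            Real.exp ((2 * a * ‖v‖ - ‖v‖ ^ 2) / (2 * σ ^ 2)) := by
          apply Real.exp_le_exp.2
          apply div_le_div_of_nonneg_right _ (by positivity)
          nlinarith
        nlinarith [gden_nonneg d σ w]
      nlinarith [mul_nonneg (neg_nonneg.2 h1) (neg_nonneg.2 h2)]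
    · push_neg at hcase
      have h1 : 0 ≤ f (x + w) - χ w := by
        rw [hχdef]
        simp only [if_neg (not_le.2 hcase)]
        linarith [(hf01 (x + w)).1]
      have h2 : 0 ≤ gden d σ w *
          Real.exp ((2 * (‖v‖ * ⟪w, u⟫) - ‖v‖ ^ 2) / (2 * σ ^ 2)) - c * gden d σ w := by
        rw [hcdef]
        have hexp : Real.exp ((2 * a * ‖v‖ - ‖v‖ ^ 2) / (2 * σ ^ 2)) ≤
            Real.exp ((2 * (‖v‖ * ⟪w, u⟫) - ‖v‖ ^ 2) / (2 * σ ^ 2)) := by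
          apply Real.exp_le_exp.2
          apply div_le_div_of_nonneg_right _ (by positivity)
          nlinarith
        nlinarith [gden_nonneg d σ w]
      exact mul_nonneg h1 h2
  have hnonneg : 0 ≤ ∫ w, (f (x + w) - χ w) * (gden d σ (w - v) - c * gden d σ w) :=
    integral_nonneg hkey
  -- expand the integral
  have hexpand : (fun w => (f (x + w) - χ w) * (gden d σ (w - v) - c * gden d σ w)) =
      fun w => (f (x + w) * gden d σ (w - v) - χ w * gden d σ (w - v)) -
        c * (f (x + w) * gden d σ w) + c * (χ w * gden d σ w) := by
    funext w
    ring
  rw [hexpand] at hnonneg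
  have hI12 : Integrable (fun w => f (x + w) * gden d σ (w - v) - χ w * gden d σ (w - v))
      volume := It1.sub It2
  have hI3' : Integrable (fun w => c * (f (x + w) * gden d σ w)) volume := It3.const_mul c
  have hI4' : Integrable (fun w => c * (χ w * gden d σ w)) volume := It4.const_mul c
  have hI123 : Integrable (fun w => f (x + w) * gden d σ (w - v) -
      χ w * gden d σ (w - v) - c * (f (x + w) * gden d σ w)) volume := hI12.sub hI3'
  rw [integral_add hI123 hI4', integral_sub hI12 hI3', integral_sub It1 It2,
    integral_const_mul, integral_const_mul] at hnonneg
  -- identify the four integrals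
  have hyx : x + v = y := by rw [hv]; abel
  have hq1 : ∫ w, f (x + w) * gden d σ (w - v) = q := by
    rw [hqdef, hfhat y, fhat_eq d hσ f y]
    have hshift := integral_add_right_eq_self (μ := volume)
      (fun w => f (x + w) * gden d σ (w - v)) v
    rw [← hshift]
    congr 1
    funext w
    rw [add_sub_cancel_right]
    have harg : x + (w + v) = y + w := by rw [← hyx]; abel
    rw [harg, mul_comm]
  have hp1 : ∫ w, f (x + w) * gden d σ w = p := by
    rw [hpdef, hfhat x, fhat_eq d hσ f x]
    congr 1
    funext w
    rw [mul_comm]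
  have hB : ∫ w, χ w * gden d σ w = p := by
    rw [hχdef]
    rw [halfspace_integral d hσ u hu a]
    rw [hadef, mul_div_cancel_left₀ _ hσ.ne']
    exact Phi_PhiInv hp
  have hvu : ⟪v, u⟫ = ‖v‖ := by
    rw [hudef, real_inner_smul_right, real_inner_self_eq_norm_sq]
    field_simp
  have hA : ∫ w, χ w * gden d σ (w - v) = Phi (PhiInv p - ‖v‖ / σ) := by
    have hshift := integral_add_right_eq_self (μ := volume)
      (fun w => χ w * gden d σ (w - v)) v
    rw [← hshift]
    have hχshift : ∀ w, χ (w + v) * gden d σ (w + v - v) =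
        (if ⟪w, u⟫ ≤ a - ‖v‖ then (1 : ℝ) else 0) * gden d σ w := by
      intro w
      rw [add_sub_cancel_right]
      congr 1
      simp only [hχdef]
      have h5 : ⟪w + v, u⟫ = ⟪w, u⟫ + ‖v‖ := by rw [inner_add_left, hvu]
      rw [h5]
      congr 1
      simp only [eq_iff_iff]
      constructor
      · intro h; linarith
      · intro h; linarith
    simp_rw [hχshift]
    rw [halfspace_integral d hσ u hu (a - ‖v‖)]
    congr 1
    rw [hadef]
    field_simp
  rw [hq1, hA, hp1, hB] at hnonneg
  -- conclude
  have hmain : Phi (PhiInv p - ‖v‖ / σ) ≤ q := by linarith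
  have hfin : PhiInv p - PhiInv q ≤ ‖v‖ / σ := by
    by_contra hcon
    push_neg at hcon
    have h1 : PhiInv q < PhiInv p - ‖v‖ / σ := by linarith
    have h2 : Phi (PhiInv q) < Phi (PhiInv p - ‖v‖ / σ) := strictMono_Phi h1
    rw [Phi_PhiInv hq] at h2
    linarith
  have hnorm : ‖v‖ = ‖x - y‖ := by rw [hv, norm_sub_rev]
  rw [hnorm] at hfin
  calc PhiInv (fhat x) - PhiInv (fhat y) ≤ ‖x - y‖ / σ := hfin
    _ = (1 / σ) * ‖x - y‖ := by ring

theorem lipschitz_phiInv_smoothed (d : ℕ) (σ : ℝ) (hσ : 0 < σ)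
    (f : EuclideanSpace ℝ (Fin d) → ℝ) (hf : Measurable f)
    (hf01 : ∀ x, f x ∈ Set.Icc (0 : ℝ) 1)
    (fhat : EuclideanSpace ℝ (Fin d) → ℝ)
    (hfhat : ∀ x, fhat x = ∫ η, f (x + η) ∂(gaussMeasure d σ))
    (hrange : ∀ x, fhat x ∈ Set.Ioo (0 : ℝ) 1) :
    ∀ x y : EuclideanSpace ℝ (Fin d),
      |PhiInv (fhat x) - PhiInv (fhat y)| ≤ (1 / σ) * ‖x - y‖ := by
  intro x y
  rcases eq_or_ne x y with rfl | hxy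
  · simp
  · rw [abs_sub_le_iff]
    constructor
    · exact one_sided d σ hσ f hf hf01 fhat hfhat hrange x y hxy
    · have := one_sided d σ hσ f hf hf01 fhat hfhat hrange y x hxy.symm
      rwa [norm_sub_rev] at this
end

section
/- (Cohen et al. certification, as derived from the Lipschitz lemma) Let f : ℝ^d → {1,...,K} be measurable, σ > 0, P_c(x) = P_{η~N(0,σ²I)}(f(x+η)=c), and g(x) = argmax_c P_c(x). If P_y(x) > max_{y'≠y} P_{y'}(x) (all probabilities in (0,1)), then for every δ with ‖δ‖₂ < (σ/2)[Φ⁻¹(P_y(x)) − Φ⁻¹(max_{y'≠y} P_{y'}(x))], we have P_y(x+δ) ≥ P_{y'}(x+δ) for all y' ≠ y, hence g(x+δ) = y. -/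
open MeasureTheory Real Set

open scoped Classical

namespace CohenAux
open ProbabilityTheory Filter

noncomputable def g0 (t : ℝ) : ℝ := (Real.sqrt (2 * Real.pi))⁻¹ * Real.exp (-t ^ 2 / 2)

lemma g0_eq_pdf : g0 = gaussianPDFReal 0 1 := by
  ext t; simp [g0, gaussianPDFReal]

lemma Phi_eq (x : ℝ) : Phi x = ∫ t in Set.Iic x, g0 t := rfl

lemma integrable_g0 : Integrable g0 := by
  rw [g0_eq_pdf]; exact integrable_gaussianPDFReal 0 1

lemma g0_pos (t : ℝ) : 0 < g0 t := by
  rw [g0_eq_pdf]; exact gaussianPDFReal_pos _ _ _ one_ne_zero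

lemma Phi_nonneg (x : ℝ) : 0 ≤ Phi x :=
  integral_nonneg fun t => (g0_pos t).le

lemma Phi_gaussianReal (x : ℝ) :
    gaussianReal 0 1 (Iic x) = ENNReal.ofReal (Phi x) := by
  rw [gaussianReal_apply_eq_integral 0 one_ne_zero, Phi_eq, g0_eq_pdf]

lemma Phi_strictMono : StrictMono Phi := by
  intro a b hab
  have h1 : Phi b - Phi a = ∫ t in a..b, g0 t :=
    intervalIntegral.integral_Iic_sub_Iic integrable_g0.integrableOn integrable_g0.integrableOn
  have h2 : 0 < ∫ t in a..b, g0 t :=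
    intervalIntegral.intervalIntegral_pos_of_pos integrable_g0.intervalIntegrable g0_pos hab
  linarith

lemma integral_g0 : ∫ t, g0 t = 1 := by
  rw [g0_eq_pdf]; exact integral_gaussianPDFReal_eq_one 0 one_ne_zero

lemma Phi_toReal (x : ℝ) : Phi x = ((gaussianReal 0 1) (Iic x)).toReal := by
  rw [Phi_gaussianReal, ENNReal.toReal_ofReal (Phi_nonneg x)]

lemma tendsto_Phi_atTop : Tendsto Phi atTop (nhds 1) := by
  have h := tendsto_measure_Iic_atTop (gaussianReal 0 1)
  rw [measure_univ] at h
  have h2 := (ENNReal.tendsto_toReal (by simp)).comp h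
  exact h2.congr fun x => (Phi_toReal x).symm

lemma Phi_neg (x : ℝ) : Phi (-x) = 1 - Phi x := by
  have h1 : ∫ t in Iic (-x), g0 t = ∫ t in Ioi x, g0 t := by
    have e1 : ∫ t in Iic (-x), g0 t = ∫ t in Iic (-x), g0 (-t) :=
      setIntegral_congr_fun measurableSet_Iic fun t _ => by simp [g0, neg_sq]
    rw [e1, integral_comp_neg_Iic (-x) g0, neg_neg]
  have h2 : Phi x + ∫ t in Ioi x, g0 t = 1 := by
    rw [Phi_eq, intervalIntegral.integral_Iic_add_Ioi integrable_g0.integrableOn integrable_g0.integrableOn,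
      integral_g0]
  rw [Phi_eq, h1]; linarith

lemma tendsto_Phi_atBot : Tendsto Phi atBot (nhds 0) := by
  have : Tendsto (fun x : ℝ => 1 - Phi (-x)) atBot (nhds (1 - 1)) :=
    (tendsto_const_nhds.sub (tendsto_Phi_atTop.comp tendsto_neg_atBot_atTop))
  simp only [sub_self] at this
  refine this.congr fun x => ?_
  rw [Phi_neg]; ring

lemma continuous_Phi : Continuous Phi := by
  have h : Phi = fun x => Phi 0 + ∫ t in (0:ℝ)..x, g0 t := by
    funext x
    rw [← intervalIntegral.integral_Iic_sub_Iic integrable_g0.integrableOn integrable_g0.integrableOn, Phi_eq,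
      Phi_eq]
    ring
  rw [h]
  exact continuous_const.add
    (intervalIntegral.continuous_primitive (fun a b => integrable_g0.intervalIntegrable) 0)

lemma Phi_surj {p : ℝ} (hp : p ∈ Set.Ioo (0:ℝ) 1) : ∃ x, Phi x = p := by
  obtain ⟨a, ha⟩ := (tendsto_Phi_atBot.eventually_lt_const hp.1).exists
  obtain ⟨b, hb⟩ := (tendsto_Phi_atTop.eventually_const_lt hp.2).exists
  have := intermediate_value_univ a b continuous_Phi
  exact this ⟨ha.le, hb.le⟩

lemma Phi_PhiInv {p : ℝ} (hp : p ∈ Set.Ioo (0:ℝ) 1) : Phi (PhiInv p) = p :=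
  Function.invFun_eq (Phi_surj hp)

end CohenAux

namespace CohenAux
section Dim
open ProbabilityTheory
variable {d : ℕ} {σ : ℝ}

noncomputable def rhoR (d : ℕ) (σ : ℝ) (x : EuclideanSpace ℝ (Fin d)) : ℝ :=
  (2 * Real.pi * σ ^ 2) ^ (-(d : ℝ) / 2) * Real.exp (-‖x‖ ^ 2 / (2 * σ ^ 2))

lemma gaussMeasure_eq : gaussMeasure d σ =
    volume.withDensity fun x => ENNReal.ofReal (rhoR d σ x) := rfl

lemma rhoR_nonneg (hσ : 0 < σ) (x : EuclideanSpace ℝ (Fin d)) : 0 ≤ rhoR d σ x := by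
  have : (0:ℝ) < 2 * Real.pi * σ ^ 2 := by positivity
  unfold rhoR
  positivity

lemma continuous_rhoR : Continuous (rhoR d σ) :=
  continuous_const.mul ((Real.continuous_exp).comp
    (((continuous_norm.pow 2).neg).div_const _))

noncomputable def vsig (σ : ℝ) : NNReal := ⟨σ ^ 2, sq_nonneg σ⟩

lemma vsig_ne_zero (hσ : 0 < σ) : vsig σ ≠ 0 := by
  have : ((vsig σ : NNReal) : ℝ) ≠ 0 := pow_ne_zero 2 hσ.ne'
  exact fun h => this (by rw [h]; simp)

lemma vsig_coe : ((vsig σ : NNReal) : ℝ) = σ ^ 2 := rfl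

lemma norm_sq_eq (x : EuclideanSpace ℝ (Fin d)) : ‖x‖ ^ 2 = ∑ i, (x i) ^ 2 := by
  rw [EuclideanSpace.norm_eq, Real.sq_sqrt (by positivity)]
  simp [Real.norm_eq_abs, sq_abs]

lemma rhoR_factor (hσ : 0 < σ) (x : EuclideanSpace ℝ (Fin d)) :
    rhoR d σ x = ∏ i, gaussianPDFReal 0 (vsig σ) (x i) := by
  have hc : (0:ℝ) < 2 * Real.pi * σ ^ 2 := by positivity
  have hpdf : ∀ s : ℝ, gaussianPDFReal 0 (vsig σ) s
      = (Real.sqrt (2 * Real.pi * σ ^ 2))⁻¹ * Real.exp (-s ^ 2 / (2 * σ ^ 2)) := by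
    intro s
    simp only [gaussianPDFReal, vsig_coe, sub_zero]
  simp_rw [hpdf]
  rw [Finset.prod_mul_distrib, Finset.prod_const, ← Real.exp_sum]
  rw [show (Finset.univ : Finset (Fin d)).card = d by simp]
  have hconst : (2 * Real.pi * σ ^ 2) ^ (-(d : ℝ) / 2)
      = (Real.sqrt (2 * Real.pi * σ ^ 2))⁻¹ ^ d := by
    rw [Real.sqrt_eq_rpow, ← Real.rpow_neg hc.le,
      ← Real.rpow_natCast ((2 * Real.pi * σ ^ 2) ^ (-(1/2) : ℝ)) d,
      ← Real.rpow_mul hc.le]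
    congr 1
    push_cast
    ring
  have hexp : -‖x‖ ^ 2 / (2 * σ ^ 2) = ∑ i, -(x i) ^ 2 / (2 * σ ^ 2) := by
    rw [norm_sq_eq, ← Finset.sum_div, ← Finset.sum_neg_distrib]
  unfold rhoR
  rw [hconst, hexp]

lemma measEquiv_apply (w : EuclideanSpace ℝ (Fin d)) (i : Fin d) :
    (MeasurableEquiv.toLp 2 (Fin d → ℝ)).symm w i = w i := rfl

lemma integrable_rhoR (hσ : 0 < σ) :
    Integrable (rhoR d σ) (volume : Measure (EuclideanSpace ℝ (Fin d))) := by
  have hp : Integrable (fun w : Fin d → ℝ => ∏ i, gaussianPDFReal 0 (vsig σ) (w i)) volume :=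
    Integrable.fin_nat_prod fun i => integrable_gaussianPDFReal 0 (vsig σ)
  have := ((EuclideanSpace.volume_preserving_symm_measurableEquiv_toLp (Fin d)).integrable_comp_emb
    (MeasurableEquiv.toLp 2 (Fin d → ℝ)).symm.measurableEmbedding).mpr hp
  refine this.congr (Filter.Eventually.of_forall fun x => ?_)
  exact (rhoR_factor hσ x).symm

lemma gm_apply {S : Set (EuclideanSpace ℝ (Fin d))} (hS : MeasurableSet S) :
    gaussMeasure d σ S = ∫⁻ w in S, ENNReal.ofReal (rhoR d σ w) ∂volume :=
  withDensity_apply _ hS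

lemma gm_eq_ofReal (hσ : 0 < σ) {S : Set (EuclideanSpace ℝ (Fin d))} (hS : MeasurableSet S) :
    gaussMeasure d σ S = ENNReal.ofReal (∫ w in S, rhoR d σ w ∂volume) := by
  rw [gm_apply hS,
    ofReal_integral_eq_lintegral_ofReal ((integrable_rhoR hσ).restrict)
      (Filter.Eventually.of_forall fun x => rhoR_nonneg hσ x)]

lemma gm_univ (hσ : 0 < σ) : gaussMeasure d σ (Set.univ) = 1 := by
  rw [gm_eq_ofReal hσ MeasurableSet.univ, Measure.restrict_univ]
  have h1 : ∫ w : EuclideanSpace ℝ (Fin d), rhoR d σ w ∂volume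
      = ∫ w : Fin d → ℝ, ∏ i, gaussianPDFReal 0 (vsig σ) (w i) ∂volume := by
    rw [← (EuclideanSpace.volume_preserving_symm_measurableEquiv_toLp (Fin d)).integral_comp
      (MeasurableEquiv.toLp 2 (Fin d → ℝ)).symm.measurableEmbedding]
    exact integral_congr_ae (Filter.Eventually.of_forall fun x => rhoR_factor hσ x)
  rw [h1, volume_pi, MeasureTheory.integral_fin_nat_prod_eq_prod
    (fun (_ : Fin d) => gaussianPDFReal 0 (vsig σ))]
  simp [integral_gaussianPDFReal_eq_one 0 (vsig_ne_zero hσ)]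

lemma gauss_Iic (hσ : 0 < σ) (t : ℝ) :
    ∫ s in Iic t, gaussianPDFReal 0 (vsig σ) s = Phi (t / σ) := by
  have hmap := gaussianReal_map_const_mul (μ := 0) (v := 1) σ
  have h0 : (⟨σ ^ 2, sq_nonneg σ⟩ : NNReal) * 1 = vsig σ := by rw [mul_one]; rfl
  rw [mul_zero] at hmap
  replace hmap : Measure.map (fun x : ℝ => σ * x) (gaussianReal 0 1) = gaussianReal 0 (vsig σ) := by
    rw [← h0]; exact hmap
  have hpre : (fun x : ℝ => σ * x) ⁻¹' (Iic t) = Iic (t / σ) := by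
    ext s
    simp only [mem_preimage, mem_Iic]
    rw [mul_comm]
    exact (le_div_iff₀ hσ).symm
  have happ : gaussianReal 0 (vsig σ) (Iic t) = ENNReal.ofReal (Phi (t / σ)) := by
    rw [← hmap, Measure.map_apply (measurable_const_mul σ) measurableSet_Iic, hpre,
      Phi_gaussianReal]
  rw [gaussianReal_apply_eq_integral 0 (vsig_ne_zero hσ) (Iic t)] at happ
  refine (ENNReal.ofReal_eq_ofReal_iff ?_ (Phi_nonneg (t / σ))).mp happ
  exact setIntegral_nonneg measurableSet_Iic fun s _ => gaussianPDFReal_nonneg 0 (vsig σ) s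

lemma meas_cyl (i₀ : Fin d) (t : ℝ) :
    MeasurableSet {w : EuclideanSpace ℝ (Fin d) | w i₀ ≤ t} := by
  have : Continuous fun w : EuclideanSpace ℝ (Fin d) => w i₀ :=
    (EuclideanSpace.proj (𝕜 := ℝ) i₀).continuous
  exact measurableSet_le this.measurable measurable_const

lemma gm_cyl (hσ : 0 < σ) (i₀ : Fin d) (t : ℝ) :
    gaussMeasure d σ {w : EuclideanSpace ℝ (Fin d) | w i₀ ≤ t}
      = ENNReal.ofReal (Phi (t / σ)) := by
  classical
  rw [gm_eq_ofReal hσ (meas_cyl i₀ t)]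
  congr 1
  set g : (Fin d → ℝ) → ℝ := fun w => ∏ i, gaussianPDFReal 0 (vsig σ) (w i) with hg
  have hS : {w : EuclideanSpace ℝ (Fin d) | w i₀ ≤ t}
      = (MeasurableEquiv.toLp 2 (Fin d → ℝ)).symm ⁻¹' {w : Fin d → ℝ | w i₀ ≤ t} := rfl
  have h1 : ∫ w in {w : EuclideanSpace ℝ (Fin d) | w i₀ ≤ t}, rhoR d σ w ∂volume
      = ∫ w in {w : Fin d → ℝ | w i₀ ≤ t}, g w ∂volume := by
    rw [hS, ← (EuclideanSpace.volume_preserving_symm_measurableEquiv_toLp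
      (Fin d)).setIntegral_preimage_emb
      (MeasurableEquiv.toLp 2 (Fin d → ℝ)).symm.measurableEmbedding g]
    exact setIntegral_congr_fun (by
      exact (meas_cyl i₀ t)) fun x _ => rhoR_factor hσ x
  set F : Fin d → ℝ → ℝ := fun i s =>
    if i = i₀ then (Iic t).indicator (gaussianPDFReal 0 (vsig σ)) s
    else gaussianPDFReal 0 (vsig σ) s with hF
  have hmeas : MeasurableSet {w : Fin d → ℝ | w i₀ ≤ t} :=
    measurableSet_le (measurable_pi_apply i₀) measurable_const
  have h2 : ∫ w in {w : Fin d → ℝ | w i₀ ≤ t}, g w ∂volume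
      = ∫ w : Fin d → ℝ, ∏ i, F i (w i) ∂volume := by
    rw [← integral_indicator hmeas]
    refine integral_congr_ae (Filter.Eventually.of_forall fun w => ?_)
    by_cases hw : w i₀ ≤ t
    · rw [Set.indicator_of_mem (show w ∈ {w : Fin d → ℝ | w i₀ ≤ t} from hw)]
      refine Finset.prod_congr rfl fun i _ => ?_
      by_cases hi : i = i₀
      · subst hi
        simp only [hF, if_pos rfl]
        rw [Set.indicator_of_mem (show w i ∈ Iic t from hw)]
      · simp only [hF, if_neg hi]
    · rw [Set.indicator_of_notMem (show w ∉ {w : Fin d → ℝ | w i₀ ≤ t} from hw)]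
      refine (Finset.prod_eq_zero (Finset.mem_univ i₀) ?_).symm
      simp only [hF, if_pos rfl]
      rw [Set.indicator_of_notMem (show w i₀ ∉ Iic t from hw)]
  rw [h1, h2, volume_pi, MeasureTheory.integral_fin_nat_prod_eq_prod F]
  have h3 : ∀ i, ∫ s, F i s = if i = i₀ then Phi (t / σ) else 1 := by
    intro i
    by_cases hi : i = i₀
    · simp only [hF, if_pos hi]
      rw [integral_indicator measurableSet_Iic, gauss_Iic hσ t]
    · simp only [hF, if_neg hi]
      exact integral_gaussianPDFReal_eq_one 0 (vsig_ne_zero hσ)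
  simp_rw [h3]
  rw [Finset.prod_ite_eq' Finset.univ i₀ (fun _ => Phi (t / σ))]
  simp

lemma meas_rho : Measurable fun w : EuclideanSpace ℝ (Fin d) => ENNReal.ofReal (rhoR d σ w) :=
  (continuous_rhoR.measurable).ennreal_ofReal

lemma gm_rot (L : EuclideanSpace ℝ (Fin d) ≃ₗᵢ[ℝ] EuclideanSpace ℝ (Fin d))
    {S : Set (EuclideanSpace ℝ (Fin d))} (hS : MeasurableSet S) :
    gaussMeasure d σ (⇑L ⁻¹' S) = gaussMeasure d σ S := by
  have hmp := L.measurePreserving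
  have hLS : MeasurableSet (⇑L ⁻¹' S) := hS.preimage hmp.measurable
  rw [gm_apply hLS, gm_apply hS, ← lintegral_indicator hLS, ← lintegral_indicator hS]
  rw [← hmp.lintegral_comp (Measurable.indicator meas_rho hS)]
  refine lintegral_congr fun w => ?_
  by_cases hw : L w ∈ S
  · rw [Set.indicator_of_mem hw, Set.indicator_of_mem (show w ∈ ⇑L ⁻¹' S from hw)]
    unfold rhoR
    rw [L.norm_map]
  · rw [Set.indicator_of_notMem hw, Set.indicator_of_notMem (show w ∉ ⇑L ⁻¹' S from hw)]

lemma gm_translate {S : Set (EuclideanSpace ℝ (Fin d))} (hS : MeasurableSet S)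
    (δ : EuclideanSpace ℝ (Fin d)) :
    gaussMeasure d σ {w | w + δ ∈ S}
      = ∫⁻ w in S, ENNReal.ofReal (rhoR d σ (w - δ)) ∂volume := by
  have hSd : MeasurableSet {w : EuclideanSpace ℝ (Fin d) | w + δ ∈ S} := by
    have : {w : EuclideanSpace ℝ (Fin d) | w + δ ∈ S} = (fun w => w + δ) ⁻¹' S := rfl
    rw [this]
    exact hS.preimage (measurable_add_const δ)
  have hmp : MeasurePreserving (fun w : EuclideanSpace ℝ (Fin d) => w + δ) volume volume :=
    measurePreserving_add_right volume δ
  have hmeasF : Measurable fun v : EuclideanSpace ℝ (Fin d) =>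
      S.indicator (fun v => ENNReal.ofReal (rhoR d σ (v - δ))) v :=
    Measurable.indicator (meas_rho.comp (measurable_sub_const δ)) hS
  rw [gm_apply hSd, ← lintegral_indicator hSd, ← lintegral_indicator hS]
  rw [← hmp.lintegral_comp hmeasF]
  refine lintegral_congr fun w => ?_
  by_cases hw : w + δ ∈ S
  · rw [Set.indicator_of_mem hw, Set.indicator_of_mem
      (show w ∈ {w : EuclideanSpace ℝ (Fin d) | w + δ ∈ S} from hw)]
    rw [add_sub_cancel_right]
  · rw [Set.indicator_of_notMem hw, Set.indicator_of_notMem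
      (show w ∉ {w : EuclideanSpace ℝ (Fin d) | w + δ ∈ S} from hw)]

lemma dens_shift (hσ : 0 < σ) (r : ℝ) (i₀ : Fin d) (w : EuclideanSpace ℝ (Fin d)) :
    rhoR d σ (w - r • EuclideanSpace.single i₀ (1:ℝ))
      = Real.exp ((2 * r * (w i₀) - r ^ 2) / (2 * σ ^ 2)) * rhoR d σ w := by
  have hσ2 : (2 * σ ^ 2) ≠ 0 := by positivity
  have hns : ‖w - r • EuclideanSpace.single i₀ (1:ℝ)‖ ^ 2
      = ‖w‖ ^ 2 - 2 * (r * w i₀) + r ^ 2 := by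
    rw [norm_sub_sq_real, real_inner_smul_right, EuclideanSpace.inner_single_right]
    rw [norm_smul, EuclideanSpace.norm_single]
    simp [mul_pow, sq_abs, Real.norm_eq_abs]
  unfold rhoR
  rw [hns]
  have he : -(‖w‖ ^ 2 - 2 * (r * w i₀) + r ^ 2) / (2 * σ ^ 2)
      = (2 * r * (w i₀) - r ^ 2) / (2 * σ ^ 2) + -‖w‖ ^ 2 / (2 * σ ^ 2) := by
    field_simp
    ring
  rw [he, Real.exp_add]
  ring

lemma main' (hσ : 0 < σ) (i₀ : Fin d) {T : Set (EuclideanSpace ℝ (Fin d))}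
    (hT : MeasurableSet T) {r : ℝ} (hr : 0 ≤ r) (a : ℝ)
    (hp : ENNReal.ofReal (Phi a) ≤ gaussMeasure d σ T) :
    ENNReal.ofReal (Phi (a - r / σ))
      ≤ gaussMeasure d σ {w | w + r • EuclideanSpace.single i₀ (1:ℝ) ∈ T} := by
  classical
  have hσ2 : (0:ℝ) < 2 * σ ^ 2 := by positivity
  set δ0 : EuclideanSpace ℝ (Fin d) := r • EuclideanSpace.single i₀ (1:ℝ) with hδ0
  set H : Set (EuclideanSpace ℝ (Fin d)) := {w | w i₀ ≤ σ * a} with hH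
  have hHm : MeasurableSet H := meas_cyl i₀ (σ * a)
  set L : EuclideanSpace ℝ (Fin d) → ENNReal :=
    fun w => ENNReal.ofReal (Real.exp ((2 * r * (w i₀) - r ^ 2) / (2 * σ ^ 2))) with hL
  have hLmeas : Measurable L := by
    refine Measurable.ennreal_ofReal (Continuous.measurable ?_)
    exact Real.continuous_exp.comp (((continuous_const.mul (EuclideanSpace.proj (𝕜 := ℝ)
      i₀).continuous).sub continuous_const).div_const _)
  set f : EuclideanSpace ℝ (Fin d) → ENNReal :=
    fun w => L w * ENNReal.ofReal (rhoR d σ w) with hf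
  have hfmeas : Measurable f := hLmeas.mul meas_rho
  set τ : ENNReal := ENNReal.ofReal (Real.exp ((2 * r * (σ * a) - r ^ 2) / (2 * σ ^ 2)))
    with hτ
  -- translation identity
  have htrans : ∀ {A : Set (EuclideanSpace ℝ (Fin d))}, MeasurableSet A →
      gaussMeasure d σ {w | w + δ0 ∈ A} = ∫⁻ w in A, f w ∂volume := by
    intro A hA
    rw [gm_translate hA δ0]
    refine lintegral_congr fun w => ?_
    rw [hf, hδ0, dens_shift hσ r i₀ w, ENNReal.ofReal_mul (Real.exp_nonneg _)]
  have happ : ∀ w : EuclideanSpace ℝ (Fin d), (w + δ0) i₀ = w i₀ + r := by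
    intro w
    have : (w + δ0) i₀ = w i₀ + δ0 i₀ := rfl
    rw [this, hδ0]
    have : δ0 i₀ = r * (EuclideanSpace.single i₀ (1:ℝ) i₀) := rfl
    rw [hδ0] at this
    rw [this, EuclideanSpace.single_apply, if_pos rfl, mul_one]
  -- measures of halfspaces
  have hμH : gaussMeasure d σ H = ENNReal.ofReal (Phi a) := by
    rw [hH, gm_cyl hσ i₀ (σ * a)]
    congr 1
    congr 1
    field_simp
  have hHδ : {w : EuclideanSpace ℝ (Fin d) | w + δ0 ∈ H}
      = {w : EuclideanSpace ℝ (Fin d) | w i₀ ≤ σ * a - r} := by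
    ext w
    simp only [hH, mem_setOf_eq, happ w]
    exact ⟨fun h => by linarith, fun h => by linarith⟩
  have hμHδ : gaussMeasure d σ {w | w + δ0 ∈ H} = ENNReal.ofReal (Phi (a - r / σ)) := by
    rw [hHδ, gm_cyl hσ i₀ (σ * a - r)]
    congr 1
    congr 1
    field_simp
  -- finiteness
  have hfin : ∀ A : Set (EuclideanSpace ℝ (Fin d)), gaussMeasure d σ A ≠ ⊤ := by
    intro A
    refine ne_top_of_le_ne_top ?_ ((measure_mono (subset_univ A)).trans (gm_univ hσ).le)
    simp
  -- splitting
  have hsplit : ∀ (A B : Set (EuclideanSpace ℝ (Fin d))), MeasurableSet A → MeasurableSet B →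
      ∫⁻ w in A, f w ∂volume
        = (∫⁻ w in A ∩ B, f w ∂volume) + ∫⁻ w in A \ B, f w ∂volume := by
    intro A B hA hB
    rw [← lintegral_union (hA.diff hB)
      (Set.disjoint_left.mpr fun x hx hx2 => hx2.2 hx.2), Set.inter_union_diff]
  -- constant-multiple integral
  have hconstint : ∀ (A : Set (EuclideanSpace ℝ (Fin d))), MeasurableSet A →
      ∫⁻ w in A, τ * ENNReal.ofReal (rhoR d σ w) ∂volume = τ * gaussMeasure d σ A := by
    intro A hA
    rw [lintegral_const_mul τ meas_rho, ← gm_apply hA]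
  -- bounds
  have hbound1 : τ * gaussMeasure d σ (T \ H) ≤ ∫⁻ w in T \ H, f w ∂volume := by
    rw [← hconstint _ (hT.diff hHm)]
    refine setLIntegral_mono' (hT.diff hHm) fun w hw => ?_
    refine mul_le_mul_left ?_ _
    rw [hτ, hL]
    refine ENNReal.ofReal_le_ofReal (Real.exp_le_exp.2 ?_)
    have hw2 : σ * a ≤ w i₀ := (lt_of_not_ge hw.2).le
    have : 2 * r * (σ * a) ≤ 2 * r * (w i₀) :=
      mul_le_mul_of_nonneg_left hw2 (by positivity)
    exact div_le_div_of_nonneg_right (by linarith) hσ2.le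
  have hbound2 : ∫⁻ w in H \ T, f w ∂volume ≤ τ * gaussMeasure d σ (H \ T) := by
    rw [← hconstint _ (hHm.diff hT)]
    refine setLIntegral_mono' (hHm.diff hT) fun w hw => ?_
    refine mul_le_mul_left ?_ _
    rw [hτ, hL]
    refine ENNReal.ofReal_le_ofReal (Real.exp_le_exp.2 ?_)
    have hw2 : w i₀ ≤ σ * a := hw.1
    have : 2 * r * (w i₀) ≤ 2 * r * (σ * a) :=
      mul_le_mul_of_nonneg_left hw2 (by positivity)
    exact div_le_div_of_nonneg_right (by linarith) hσ2.le
  -- measure comparison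
  have hμdiff : gaussMeasure d σ (H \ T) ≤ gaussMeasure d σ (T \ H) := by
    have e1 := measure_inter_add_diff (μ := gaussMeasure d σ) T hHm
    have e2 := measure_inter_add_diff (μ := gaussMeasure d σ) H hT
    have hHT : gaussMeasure d σ H ≤ gaussMeasure d σ T := hμH ▸ hp
    rw [Set.inter_comm H T] at e2
    have : gaussMeasure d σ (T ∩ H) + gaussMeasure d σ (H \ T)
        ≤ gaussMeasure d σ (T ∩ H) + gaussMeasure d σ (T \ H) := by
      rw [e1, e2]
      exact hHT
    exact (ENNReal.add_le_add_iff_left (hfin _)).mp this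
  calc ENNReal.ofReal (Phi (a - r / σ)) = gaussMeasure d σ {w | w + δ0 ∈ H} := hμHδ.symm
    _ = ∫⁻ w in H, f w ∂volume := htrans hHm
    _ = (∫⁻ w in H ∩ T, f w ∂volume) + ∫⁻ w in H \ T, f w ∂volume := hsplit H T hHm hT
    _ ≤ (∫⁻ w in H ∩ T, f w ∂volume) + τ * gaussMeasure d σ (H \ T) :=
        add_le_add_right hbound2 _
    _ ≤ (∫⁻ w in H ∩ T, f w ∂volume) + τ * gaussMeasure d σ (T \ H) :=
        add_le_add_right (mul_le_mul_right hμdiff τ) _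
    _ ≤ (∫⁻ w in H ∩ T, f w ∂volume) + ∫⁻ w in T \ H, f w ∂volume :=
        add_le_add_right hbound1 _
    _ = (∫⁻ w in T ∩ H, f w ∂volume) + ∫⁻ w in T \ H, f w ∂volume := by
        rw [Set.inter_comm]
    _ = ∫⁻ w in T, f w ∂volume := (hsplit T H hT hHm).symm
    _ = gaussMeasure d σ {w | w + δ0 ∈ T} := (htrans hT).symm

lemma gm_ne_top (hσ : 0 < σ) (A : Set (EuclideanSpace ℝ (Fin d))) :
    gaussMeasure d σ A ≠ ⊤ := by
  refine ne_top_of_le_ne_top ?_ ((measure_mono (subset_univ A)).trans (gm_univ hσ).le)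
  simp

lemma main (hσ : 0 < σ) {S : Set (EuclideanSpace ℝ (Fin d))} (hS : MeasurableSet S)
    (δ : EuclideanSpace ℝ (Fin d)) (a : ℝ)
    (hp : ENNReal.ofReal (Phi a) ≤ gaussMeasure d σ S) :
    ENNReal.ofReal (Phi (a - ‖δ‖ / σ)) ≤ gaussMeasure d σ {w | w + δ ∈ S} := by
  classical
  by_cases hδ : δ = 0
  · subst hδ
    have h0 : {w : EuclideanSpace ℝ (Fin d) | w + 0 ∈ S} = S := by ext w; simp
    rw [norm_zero, zero_div, sub_zero, h0]
    exact hp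
  · have hι : Nonempty (Fin d) := by
      by_contra h
      haveI : IsEmpty (Fin d) := not_nonempty_iff.mp h
      exact hδ (PiLp.ext fun i => (IsEmpty.false i).elim)
    set i₀ : Fin d := Classical.arbitrary (Fin d) with hi₀
    have hnδ : ‖δ‖ ≠ 0 := norm_ne_zero_iff.mpr hδ
    set u : EuclideanSpace ℝ (Fin d) := ‖δ‖⁻¹ • δ with hu0
    have hu : ‖u‖ = 1 := by
      rw [hu0, norm_smul, Real.norm_eq_abs, abs_inv, abs_norm, inv_mul_cancel₀ hnδ]
    have horth : Orthonormal ℝ (({i₀} : Set (Fin d)).restrict (fun _ : Fin d => u)) := by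
      rw [orthonormal_iff_ite]
      intro i j
      have hij : i = j := Subtype.ext (by rw [mem_singleton_iff.mp i.2, mem_singleton_iff.mp j.2])
      rw [if_pos hij, hij]
      show inner ℝ u u = (1:ℝ)
      rw [real_inner_self_eq_norm_mul_norm, hu, mul_one]
    obtain ⟨b, hb⟩ := horth.exists_orthonormalBasis_extension_of_card_eq
      (by simp [finrank_euclideanSpace_fin])
    have hbu : b i₀ = u := hb i₀ rfl
    set T : Set (EuclideanSpace ℝ (Fin d)) := ⇑b.repr.symm ⁻¹' S with hTdef
    have hT : MeasurableSet T := hS.preimage (b.repr.symm.measurePreserving).measurable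
    have hμT : gaussMeasure d σ T = gaussMeasure d σ S := gm_rot b.repr.symm hS
    have h1 := main' hσ i₀ hT (norm_nonneg δ) a (by rw [hμT]; exact hp)
    have hset : {w : EuclideanSpace ℝ (Fin d) |
        w + ‖δ‖ • EuclideanSpace.single i₀ (1:ℝ) ∈ T}
        = ⇑b.repr.symm ⁻¹' {w | w + δ ∈ S} := by
      ext w
      have hkey : b.repr.symm (w + ‖δ‖ • EuclideanSpace.single i₀ (1:ℝ))
          = b.repr.symm w + δ := by
        rw [map_add, LinearIsometryEquiv.map_smul, OrthonormalBasis.repr_symm_single, hbu,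
          hu0, smul_inv_smul₀ hnδ]
      simp only [hTdef, mem_setOf_eq, mem_preimage, hkey]
    rw [hset] at h1
    rw [gm_rot b.repr.symm (show MeasurableSet {w : EuclideanSpace ℝ (Fin d) | w + δ ∈ S}
      from hS.preimage (measurable_add_const δ))] at h1
    exact h1

lemma main_real (hσ : 0 < σ) {S : Set (EuclideanSpace ℝ (Fin d))} (hS : MeasurableSet S)
    (δ : EuclideanSpace ℝ (Fin d)) (a : ℝ)
    (h : Phi a ≤ (gaussMeasure d σ S).toReal) :
    Phi (a - ‖δ‖ / σ) ≤ (gaussMeasure d σ {w | w + δ ∈ S}).toReal := by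
  have h1 := main hσ hS δ a (ENNReal.ofReal_le_of_le_toReal h)
  have h2 := ENNReal.toReal_mono (gm_ne_top hσ _) h1
  rwa [ENNReal.toReal_ofReal (Phi_nonneg _)] at h2

end Dim
end CohenAux

namespace CohenAux
open ProbabilityTheory

lemma meas_class {d K : ℕ} (f : EuclideanSpace ℝ (Fin d) → Fin K) (hf : Measurable f)
    (z : EuclideanSpace ℝ (Fin d)) (c : Fin K) :
    MeasurableSet {η : EuclideanSpace ℝ (Fin d) | f (z + η) = c} :=
  (hf.comp (measurable_const_add z)) (measurableSet_singleton c)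

lemma P_eq {d K : ℕ} {σ : ℝ} (f : EuclideanSpace ℝ (Fin d) → Fin K) (hf : Measurable f)
    (c : Fin K) (z : EuclideanSpace ℝ (Fin d)) :
    ∫ η, (if f (z + η) = c then (1 : ℝ) else 0) ∂(gaussMeasure d σ)
      = ((gaussMeasure d σ) {η | f (z + η) = c}).toReal := by
  have h1 : ∀ η : EuclideanSpace ℝ (Fin d),
      (if f (z + η) = c then (1 : ℝ) else 0)
        = {η : EuclideanSpace ℝ (Fin d) | f (z + η) = c}.indicator (fun _ => (1:ℝ)) η := by
    intro η
    rw [Set.indicator_apply]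
    rfl
  simp_rw [h1]
  rw [integral_indicator_const (1:ℝ) (meas_class f hf z c), smul_eq_mul, mul_one]
  rfl

end CohenAux

theorem cohen_certification (d K : ℕ) (hK : 2 ≤ K) (σ : ℝ) (hσ : 0 < σ)
    (f : EuclideanSpace ℝ (Fin d) → Fin K) (hf : Measurable f)
    (P : Fin K → EuclideanSpace ℝ (Fin d) → ℝ)
    (hP : ∀ c x, P c x =
      ∫ η, (if f (x + η) = c then (1 : ℝ) else 0) ∂(gaussMeasure d σ))
    (x : EuclideanSpace ℝ (Fin d)) (y : Fin K)
    (hrange : ∀ c x', P c x' ∈ Set.Ioo (0 : ℝ) 1)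
    (hcorrect : ∀ y', y' ≠ y → P y' x < P y x)
    (M : ℝ) (hM : IsGreatest {v | ∃ y', y' ≠ y ∧ v = P y' x} M) :
    ∀ δ : EuclideanSpace ℝ (Fin d),
      ‖δ‖ < σ / 2 * (PhiInv (P y x) - PhiInv M) →
      ∀ y', y' ≠ y → P y' (x + δ) ≤ P y (x + δ) := by
  intro δ hδ y' hy'
  open CohenAux in
  have hPset : ∀ (c : Fin K) (z : EuclideanSpace ℝ (Fin d)),
      P c z = ((gaussMeasure d σ) {η | f (z + η) = c}).toReal := fun c z => by
    rw [hP c z, CohenAux.P_eq f hf c z]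
  obtain ⟨y0, hy0, hMy0⟩ := hM.1
  have hMrange : M ∈ Set.Ioo (0:ℝ) 1 := hMy0 ▸ hrange y0 x
  have hMlt : M < P y x := hMy0 ▸ hcorrect y0 hy0
  have hPhiA : Phi (PhiInv (P y x)) = P y x := CohenAux.Phi_PhiInv (hrange y x)
  have hPhiB : Phi (PhiInv M) = M := CohenAux.Phi_PhiInv hMrange
  have hBA : PhiInv M < PhiInv (P y x) := by
    by_contra h
    push_neg at h
    have := CohenAux.Phi_strictMono.monotone h
    rw [hPhiA, hPhiB] at this
    linarith
  have hhalf : σ / 2 * (PhiInv (P y x) - PhiInv M)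
      = (PhiInv (P y x) - PhiInv M) / 2 * σ := by ring
  have hr : ‖δ‖ / σ < (PhiInv (P y x) - PhiInv M) / 2 := by
    rw [div_lt_iff₀ hσ]
    rw [hhalf] at hδ
    exact hδ
  -- lower bound for y at x + δ
  have hlow : Phi (PhiInv (P y x) - ‖δ‖ / σ) ≤ P y (x + δ) := by
    have h := CohenAux.main_real hσ (CohenAux.meas_class f hf x y) δ (PhiInv (P y x))
      (by rw [hPhiA, hPset y x])
    have hsets : {w : EuclideanSpace ℝ (Fin d) | w + δ ∈ {η | f (x + η) = y}}
        = {η : EuclideanSpace ℝ (Fin d) | f ((x + δ) + η) = y} := by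
      ext w
      simp only [mem_setOf_eq]
      have : x + (w + δ) = (x + δ) + w := by abel
      rw [this]
    rw [hsets] at h
    rw [hPset y (x + δ)]
    exact h
  -- upper bound for y' at x + δ
  have hPhic : Phi (PhiInv (P y' (x + δ))) = P y' (x + δ) :=
    CohenAux.Phi_PhiInv (hrange y' (x + δ))
  have hup : PhiInv (P y' (x + δ)) - ‖δ‖ / σ ≤ PhiInv M := by
    have h := CohenAux.main_real hσ (CohenAux.meas_class f hf (x + δ) y') (-δ)
      (PhiInv (P y' (x + δ))) (by rw [hPhic, hPset y' (x + δ)])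
    have hsets : {w : EuclideanSpace ℝ (Fin d) | w + -δ ∈ {η | f ((x + δ) + η) = y'}}
        = {η : EuclideanSpace ℝ (Fin d) | f (x + η) = y'} := by
      ext w
      simp only [mem_setOf_eq]
      have : (x + δ) + (w + -δ) = x + w := by abel
      rw [this]
    rw [hsets, norm_neg, ← hPset y' x] at h
    have hPy'M : P y' x ≤ M := hM.2 ⟨y', hy', rfl⟩
    by_contra hcon
    push_neg at hcon
    have := CohenAux.Phi_strictMono hcon
    rw [hPhiB] at this
    linarith
  have hfinal : PhiInv (P y' (x + δ)) ≤ PhiInv (P y x) - ‖δ‖ / σ := by linarith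
  calc P y' (x + δ) = Phi (PhiInv (P y' (x + δ))) := hPhic.symm
    _ ≤ Phi (PhiInv (P y x) - ‖δ‖ / σ) := CohenAux.Phi_strictMono.monotone hfinal
    _ ≤ P y (x + δ) := hlow
end

section
/- Total loss surrogate property: if l_C(x,y) ≥ 1{g(x) ≠ y} and l_R(x,y) ≥ 1{g(x) = y and CR(g;x,y) < ε} pointwise, then l_C(x,y) + l_R(x,y) ≥ 1 − 1{CR(g;x,y) ≥ ε}, the 0/1 certified robust error. -/
open scoped Classical

theorem total_loss_surrogate {X Y : Type*} (g : X → Y) (CR : X → Y → ℝ)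
    (hCRnonneg : ∀ x y, 0 ≤ CR x y)
    (hCRzero : ∀ x y, g x ≠ y → CR x y = 0)
    (ε : ℝ) (hε : 0 < ε) (lC lR : X → Y → ℝ)
    (hlC : ∀ x y, (if g x ≠ y then (1 : ℝ) else 0) ≤ lC x y)
    (hlR : ∀ x y, (if g x = y ∧ CR x y < ε then (1 : ℝ) else 0) ≤ lR x y) :
    ∀ x y, (1 - if ε ≤ CR x y then (1 : ℝ) else 0) ≤ lC x y + lR x y := by
  intro x y
  have h1 := hlC x y
  have h2 := hlR x y
  by_cases hle : ε ≤ CR x y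
  · simp [hle]
    have h1' : (0:ℝ) ≤ lC x y := le_trans (by positivity) h1
    have h2' : (0:ℝ) ≤ lR x y := le_trans (by positivity) h2
    linarith
  · simp [hle]
    by_cases hg : g x = y
    · have : (if g x = y ∧ CR x y < ε then (1:ℝ) else 0) = 1 := by
        simp [hg, lt_of_not_ge hle]
      rw [this] at h2
      have h1' : (0:ℝ) ≤ lC x y := le_trans (by positivity) h1
      linarith
    · have : (if g x ≠ y then (1:ℝ) else 0) = 1 := by simp [hg]
      rw [this] at h1
      have h2' : (0:ℝ) ≤ lR x y := le_trans (by positivity) h2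
      linarith
end
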